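/- Let k be a field, A a k-algebra of finite expansion, and p a prime ideal of A, regarded as a point of Spec A. Then the following are equivalent: (a) the connected component of p in Spec A is the singleton {p} (p is quasi-isolated); (b) the singleton {p} is an irreducible component of Spec A; (c) the local ring A_p (the localization of A at p) is integral over k. -/

import Mathlib

open Polynomial
set_option maxHeartbeats 1000000
set_option synthInstance.maxHeartbeats 400000

/-- An `R`-algebra `A` is of *finite expansion* if it is integral over a finitely
generated subalgebra, i.e. there is a finite set of quasi-generators. -/
def Algebra.FiniteExpansion (R A : Type*) [CommRing R] [CommRing A] [Algebra R A] : Prop :=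
  ∃ s : Finset A, Algebra.IsIntegral (Algebra.adjoin R (s : Set A)) A

section Helpers

variable {k : Type*} [Field k]



/-- For `x` integral over a field, some power of `x` is a multiple of the next power. -/
lemma pow_stab {R : Type*} [CommRing R] [Algebra k R] (x : R) (hx : IsIntegral k x) :
    ∃ (N : ℕ) (t : R), 1 ≤ N ∧ x ^ N = t * x ^ (N + 1) := by
  let S := Algebra.adjoin k ({x} : Set R)
  have hfin : Module.Finite k S := ⟨(Subalgebra.toSubmodule S).fg_top.mpr hx.fg_adjoin_singleton⟩
  have hart : IsArtinianRing S := isArtinian_of_tower k inferInstance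
  set y : S := ⟨x, Algebra.subset_adjoin rfl⟩ with hy
  have mono : ∀ m n : ℕ, m ≤ n → Ideal.span {y ^ n} ≤ Ideal.span {y ^ m} := by
    intro m n h
    rw [Ideal.span_singleton_le_span_singleton]
    exact ⟨y ^ (n - m), by rw [← pow_add]; congr 1; omega⟩
  obtain ⟨n0, hn0⟩ := IsArtinian.monotone_stabilizes (M := S) (f :=
    ⟨fun n => OrderDual.toDual (Ideal.span {y ^ n}), fun a b h => mono a b h⟩)
  have key : Ideal.span {y ^ (n0 + 1 + 1)} = Ideal.span {y ^ (n0 + 1)} := by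
    have h1 := hn0 (n0 + 1) (by omega)
    have h2 := hn0 (n0 + 1 + 1) (by omega)
    exact (h1.symm.trans h2).symm
  have hmem : y ^ (n0 + 1) ∈ Ideal.span {y ^ (n0 + 1 + 1)} := by
    rw [key]; exact Ideal.subset_span rfl
  obtain ⟨t, ht⟩ := Ideal.mem_span_singleton'.mp hmem
  refine ⟨n0 + 1, t, by omega, ?_⟩
  have := congrArg (Subtype.val) ht
  push_cast at this
  rw [← this]

/-- From a stabilized power, an idempotent. -/
lemma idem_of_stab {R : Type*} [CommRing R] (x t : R) (N : ℕ)
    (h : x ^ N = t * x ^ (N + 1)) :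
    ∃ e, e * e = e ∧ x ^ N * e = x ^ N ∧ e = t ^ N * x ^ N := by
  have hiter : ∀ m : ℕ, x ^ N = (t * x) ^ m * x ^ N := by
    intro m
    induction m with
    | zero => simp
    | succ m ih =>
      calc x ^ N = (t * x) ^ m * x ^ N := ih
      _ = (t * x) ^ m * (t * x ^ (N + 1)) := by rw [← h]
      _ = (t * x) ^ (m + 1) * x ^ N := by ring
  refine ⟨t ^ N * x ^ N, ?_, ?_, rfl⟩
  · have := hiter N
    rw [mul_pow] at this
    calc (t ^ N * x ^ N) * (t ^ N * x ^ N) = t ^ N * (t ^ N * x ^ N * x ^ N) := by ring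
    _ = t ^ N * x ^ N := by rw [← this]
  · have := hiter N
    rw [mul_pow] at this
    calc x ^ N * (t ^ N * x ^ N) = t ^ N * x ^ N * x ^ N := by ring
    _ = x ^ N := this.symm

/-- Two distinct primes in a ring integral over a field are separated by an idempotent. -/
lemma sep_idem {R : Type*} [CommRing R] [Algebra k R] (hR : Algebra.IsIntegral k R)
    {P P' : Ideal R} (hP : P.IsPrime) (hP' : P'.IsPrime) (hne : P ≠ P') :
    ∃ e, e * e = e ∧ e ∈ P ∧ e ∉ P' := by
  have half : ∀ (Q Q' : Ideal R), Q'.IsPrime → ∀ a, a ∈ Q → a ∉ Q' →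
      ∃ e, e * e = e ∧ e ∈ Q ∧ e ∉ Q' := by
    intro Q Q' hQ' a haQ haQ'
    obtain ⟨N, t, hN, hst⟩ := pow_stab a (hR.isIntegral a)
    obtain ⟨e, he, hxe, hee⟩ := idem_of_stab a t N hst
    refine ⟨e, he, ?_, ?_⟩
    · rw [hee]; exact Ideal.mul_mem_left _ _ (Ideal.pow_mem_of_mem Q haQ N (by omega))
    · intro heQ'
      have h1 : a ^ N * (1 - e) = 0 := by rw [mul_sub, hxe]; ring
      have h2 : a ^ N * (1 - e) ∈ Q' := by rw [h1]; exact Q'.zero_mem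
      rcases hQ'.mem_or_mem h2 with h | h
      · exact haQ' (hQ'.mem_of_pow_mem _ h)
      · have : (1 : R) ∈ Q' := by have := Q'.add_mem h heQ'; simpa using this
        exact hQ'.ne_top (Q'.eq_top_iff_one.mpr this)
  by_cases hle : P ≤ P'
  · have hlt : ¬ P' ≤ P := fun h => hne (le_antisymm hle h)
    obtain ⟨a, haP', haP⟩ := SetLike.not_le_iff_exists.mp hlt
    obtain ⟨e, he, heP', heP⟩ := half P' P hP a haP' haP
    refine ⟨1 - e, by rw [mul_sub, mul_one, sub_mul, one_mul, he]; ring, ?_, ?_⟩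
    · -- 1 - e ∈ P : e ∉ P, e(1-e)=0 ∈ P
      have h0 : e * (1 - e) = 0 := by rw [mul_sub, mul_one, he]; ring
      have : e * (1 - e) ∈ P := by rw [h0]; exact P.zero_mem
      rcases hP.mem_or_mem this with h | h
      · exact absurd h heP
      · exact h
    · intro h
      have : (1 : R) ∈ P' := by have := P'.add_mem h heP'; simpa using this
      exact hP'.ne_top (P'.eq_top_iff_one.mpr this)
  · obtain ⟨a, haP, haP'⟩ := SetLike.not_le_iff_exists.mp hle
    exact half P P' hP' a haP haP'

/-- zero locus of an idempotent is clopen. -/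
lemma clopen_idem {A : Type*} [CommRing A] (e : A) (he : e * e = e) :
    IsClopen (PrimeSpectrum.zeroLocus ({e} : Set A)) := by
  constructor
  · exact PrimeSpectrum.isClosed_zeroLocus _
  · have hcompl : (PrimeSpectrum.zeroLocus ({e} : Set A))ᶜ =
        PrimeSpectrum.zeroLocus ({1 - e} : Set A) := by
      ext P
      simp only [Set.mem_compl_iff, PrimeSpectrum.mem_zeroLocus, Set.singleton_subset_iff,
        SetLike.mem_coe]
      constructor
      · intro hnot
        have h0 : e * (1 - e) = 0 := by rw [mul_sub, mul_one, he]; ring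
        have : e * (1 - e) ∈ P.asIdeal := by rw [h0]; exact P.asIdeal.zero_mem
        rcases P.isPrime.mem_or_mem this with h | h
        · exact absurd h hnot
        · exact h
      · intro h1e he'
        have : (1 : A) ∈ P.asIdeal := by have := P.asIdeal.add_mem h1e he'; simpa using this
        exact P.isPrime.ne_top (P.asIdeal.eq_top_iff_one.mpr this)
    rw [← isClosed_compl_iff, hcompl]
    exact PrimeSpectrum.isClosed_zeroLocus _




/-- inverse of a unit that is integral over `k` lies in the image of any subring containing it -/
lemma inv_in_image {A L : Type*} [CommRing A] [Algebra k A] [CommRing L] [Algebra k L]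
    [Algebra A L] [IsScalarTower k A L] (hc : Algebra.IsIntegral k L)
    (u : A) (hu : IsUnit (algebraMap A L u)) :
    ∃ w : A, algebraMap A L w * algebraMap A L u = 1 := by
  set v := algebraMap A L u with hv
  have hi : IsIntegral k v := hc.isIntegral v
  have hfin : Module.Finite k (Algebra.adjoin k ({v} : Set L)) :=
    ⟨(Subalgebra.toSubmodule _).fg_top.mpr hi.fg_adjoin_singleton⟩
  set S := Algebra.adjoin k ({v} : Set L) with hS
  set y : S := ⟨v, Algebra.subset_adjoin rfl⟩ with hy
  have hinj : Function.Injective (LinearMap.mulLeft k y) := by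
    intro a b hab
    simp only [LinearMap.mulLeft_apply] at hab
    have h2 : v * (a : L) = v * (b : L) := congrArg Subtype.val hab
    exact Subtype.ext (hu.mul_left_cancel h2)
  obtain ⟨z, hz⟩ := (LinearMap.injective_iff_surjective
    (f := LinearMap.mulLeft k y)).mp hinj 1
  simp only [LinearMap.mulLeft_apply] at hz
  have hz' : v * (z : L) = 1 := congrArg Subtype.val hz
  have hzmem : (z : L) ∈ Algebra.adjoin k ({v} : Set L) := z.2
  rw [Algebra.adjoin_singleton_eq_range_aeval] at hzmem
  obtain ⟨Q, hQ⟩ := hzmem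
  refine ⟨Polynomial.aeval u Q, ?_⟩
  have heq : algebraMap A L (Polynomial.aeval u Q) = Polynomial.aeval v Q := by
    have h := Polynomial.aeval_algHom_apply (IsScalarTower.toAlgHom k A L) u Q
    rw [hv]
    exact h.symm
  have hQ' : (Polynomial.aeval v) Q = (z : L) := hQ
  rw [heq, hQ', mul_comm]
  exact hz'

/-- surjectivity of the localization map when the localization is integral over k -/
lemma loc_surj {A : Type*} [CommRing A] [Algebra k A] (p : PrimeSpectrum A)
    (hc : Algebra.IsIntegral k (Localization.AtPrime p.asIdeal)) :
    Function.Surjective (algebraMap A (Localization.AtPrime p.asIdeal)) := by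
  intro y0
  obtain ⟨a, u, h0⟩ := IsLocalization.exists_mk'_eq p.asIdeal.primeCompl y0
  rw [← h0]
  set L := Localization.AtPrime p.asIdeal with hLdef
  have hu : IsUnit (algebraMap A L (u : A)) := IsLocalization.map_units L u
  obtain ⟨w, hw⟩ := inv_in_image hc (u : A) hu
  refine ⟨a * w, ?_⟩
  have spec := IsLocalization.mk'_spec L a u
  calc algebraMap A L (a * w) = algebraMap A L a * algebraMap A L w := map_mul _ _ _
    _ = (IsLocalization.mk' L a u * algebraMap A L (u : A)) * algebraMap A L w := by rw [spec]
    _ = IsLocalization.mk' L a u * (algebraMap A L w * algebraMap A L (u : A)) := by ring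
    _ = IsLocalization.mk' L a u := by rw [hw, mul_one]




/-- If `A` is integral over a subalgebra `B`, and `I` is an ideal of `A` containing an ideal
`IB` of `B` such that `B/IB` is a finite `k`-module, then `A/I` is integral over `k`. -/
lemma aux_int {A : Type*} [CommRing A] [Algebra k A] (B : Subalgebra k A)
    (hs : Algebra.IsIntegral B A) (IB : Ideal B) (I : Ideal A)
    (hfin : Module.Finite k (B ⧸ IB)) (hle : ∀ b : B, b ∈ IB → (b : A) ∈ I) :
    Algebra.IsIntegral k (A ⧸ I) := by
  constructor
  intro a
  obtain ⟨a₀, rfl⟩ := Ideal.Quotient.mk_surjective a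
  set χ : A →ₐ[k] A ⧸ I := Ideal.Quotient.mkₐ k I with hχ
  have hker : ∀ b : B, b ∈ IB → χ (B.val b) = 0 := by
    intro b hb
    exact Ideal.Quotient.eq_zero_iff_mem.mpr (hle b hb)
  set ψ : (B ⧸ IB) →ₐ[k] A ⧸ I :=
    Ideal.Quotient.liftₐ IB (χ.comp B.val) (by intro b hb; exact hker b hb) with hψ
  set B₂ : Subalgebra k (A ⧸ I) := ψ.range with hB₂
  have hfin₂ : Module.Finite k B₂ := by
    have hsurj : Function.Surjective ψ.rangeRestrict := ψ.rangeRestrict_surjective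
    exact Module.Finite.of_surjective ψ.rangeRestrict.toLinearMap hsurj
  have hint₂ : Algebra.IsIntegral k B₂ := Algebra.IsIntegral.of_finite k B₂
  -- a₀'s integrality over B
  obtain ⟨P, hPmonic, hPeval⟩ := hs.isIntegral a₀
  -- transport to B₂
  set ρ : B →+* B₂ := (ψ.rangeRestrict.comp (Ideal.Quotient.mkₐ k IB)).toRingHom with hρ
  have hcomm : (algebraMap B₂ (A ⧸ I)).comp ρ = (χ.toRingHom).comp (algebraMap B A) := by
    ext b
    rfl
  have hint : IsIntegral B₂ (Ideal.Quotient.mk I a₀) := by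
    refine ⟨P.map ρ, hPmonic.map ρ, ?_⟩
    rw [Polynomial.eval₂_map, hcomm]
    have h2 := Polynomial.hom_eval₂ (p := P) (f := algebraMap B A) (g := χ.toRingHom) a₀
    have h3 : (Ideal.Quotient.mk I) (Polynomial.eval₂ (algebraMap B A) a₀ P) =
        Polynomial.eval₂ ((χ.toRingHom).comp (algebraMap B A)) (Ideal.Quotient.mk I a₀) P := h2
    rw [← h3, hPeval, map_zero]
  exact isIntegral_trans (A := B₂) _ hint

/-- (c) → (a) -/
lemma main_ca {A : Type*} [CommRing A] [Algebra k A] (B : Subalgebra k A)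
    (hB : B.FG) (hs : Algebra.IsIntegral B A) (p : PrimeSpectrum A)
    (hc : Algebra.IsIntegral k (Localization.AtPrime p.asIdeal)) :
    connectedComponent p = {p} := by
  apply Set.eq_singleton_iff_unique_mem.mpr
  refine ⟨mem_connectedComponent, ?_⟩
  intro p' hp'
  by_contra hne
  set L := Localization.AtPrime p.asIdeal with hLdef
  set φ : A →+* L := algebraMap A L with hφdef
  have hsurj : Function.Surjective φ := loc_surj p hc
  -- B is Noetherian
  have hft : Algebra.FiniteType k B := (Subalgebra.fg_iff_finiteType B).mp hB
  have hnoeth : IsNoetherianRing B := Algebra.FiniteType.isNoetherianRing k B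
  -- the kernel ideal of B → L
  set ψ : B →+* L := φ.comp (algebraMap B A) with hψdef
  set JB : Ideal B := RingHom.ker ψ with hJBdef
  -- B ⧸ JB is finite over k
  have hintJB : Algebra.IsIntegral k (B ⧸ JB) := by
    constructor
    intro x
    set θ : (B ⧸ JB) →ₐ[k] L := Ideal.Quotient.liftₐ JB
      ((IsScalarTower.toAlgHom k A L).comp B.val)
      (fun b hb => by exact hb) with hθdef
    have hinj : Function.Injective θ := by
      intro x y hxy
      obtain ⟨x₀, rfl⟩ := Ideal.Quotient.mk_surjective x
      obtain ⟨y₀, rfl⟩ := Ideal.Quotient.mk_surjective y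
      have : θ (Ideal.Quotient.mk JB x₀) = ψ x₀ := rfl
      have h2 : ψ x₀ = ψ y₀ := hxy
      rw [Ideal.Quotient.eq]
      exact (RingHom.sub_mem_ker_iff ψ).mpr h2
    exact (isIntegral_algHom_iff θ hinj).mp (hc.isIntegral (θ x))
  have hftJB : Algebra.FiniteType k (B ⧸ JB) :=
    hft.of_surjective (Ideal.Quotient.mkₐ k JB)
      (Ideal.Quotient.mkₐ_surjective k JB)
  have hfinJB : Module.Finite k (B ⧸ JB) := Algebra.IsIntegral.finite
  -- generators of JB
  obtain ⟨T, hT⟩ := (isNoetherian_def.mp hnoeth) JB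
  -- the common witness c
  have hwit : ∀ (U : Finset B), (∀ x ∈ U, ψ x = 0) →
      ∃ c : A, φ c = 0 ∧ ∀ x ∈ U, (x : A) * (1 - c) = 0 := by
    classical
    intro U
    induction U using Finset.induction_on with
    | empty => exact fun _ => ⟨0, map_zero φ, by simp⟩
    | insert _ _ hnotmem ih =>
      rename_i x U'
      intro hU
      obtain ⟨c', hc'0, hc'⟩ := ih (fun y hy => hU y (Finset.mem_insert_of_mem hy))
      have hx0 : φ (x : A) = 0 := hU x (Finset.mem_insert_self x U')
      obtain ⟨u, hu⟩ := (IsLocalization.map_eq_zero_iff p.asIdeal.primeCompl L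
        ((x : A))).mp hx0
      have huunit : IsUnit (φ ((u : A))) := IsLocalization.map_units L u
      obtain ⟨w, hw⟩ := inv_in_image hc ((u : A)) huunit
      set cx : A := 1 - w * (u : A) with hcxdef
      have hcx0 : φ cx = 0 := by
        have : φ cx = 1 - φ w * φ (u : A) := by
          rw [hcxdef]; push_cast [map_sub, map_mul, map_one]; ring
        rw [this, hw]; ring
      have hxcx : (x : A) * (1 - cx) = 0 := by
        have h1 : (1 : A) - cx = w * (u : A) := by rw [hcxdef]; ring
        calc (x : A) * (1 - cx) = w * ((u : A) * (x : A)) := by rw [h1]; ring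
          _ = 0 := by rw [hu, mul_zero]
      refine ⟨1 - (1 - cx) * (1 - c'), ?_, ?_⟩
      · have : φ (1 - (1 - cx) * (1 - c')) = 1 - (1 - φ cx) * (1 - φ c') := by
          push_cast [map_sub, map_mul, map_one]; ring
        rw [this, hcx0, hc'0]; ring
      · intro y hy
        have h1 : (1 : A) - (1 - (1 - cx) * (1 - c')) = (1 - cx) * (1 - c') := by ring
        rw [h1]
        rcases Finset.mem_insert.mp hy with rfl | hy'
        · calc (y : A) * ((1 - cx) * (1 - c')) = ((y : A) * (1 - cx)) * (1 - c') := by ring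
            _ = 0 := by rw [hxcx]; ring
        · calc (y : A) * ((1 - cx) * (1 - c')) = ((y : A) * (1 - c')) * (1 - cx) := by ring
            _ = 0 := by rw [hc' y hy']; ring
  obtain ⟨c, hc0, hcT⟩ := hwit T (fun x hx => by
    have : x ∈ JB := by rw [← hT]; exact Ideal.subset_span hx
    exact this)
  -- c kills all of (the image of) JB
  have hann : ∀ b : B, b ∈ JB → (b : A) * (1 - c) = 0 := by
    intro b hb
    rw [← hT] at hb
    refine Submodule.span_induction ?_ ?_ ?_ ?_ hb
    · intro y hy; exact hcT y hy
    · simp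
    · intro y z _ _ hy hz
      push_cast [add_mul]
      rw [hy, hz]; ring
    · intro r y _ hy
      have : ((r • y : B) : A) = (r : A) * (y : A) := by push_cast; rfl
      rw [this, mul_assoc, hy]; ring
  -- c lies in p
  have hcp : c ∈ p.asIdeal := by
    have h0 : φ c ∈ IsLocalRing.maximalIdeal L := by rw [hc0]; exact zero_mem _
    exact (IsLocalization.AtPrime.to_map_mem_maximal_iff L p.asIdeal c).mp h0
  -- the ideal JA = JB·A, and the fact that (1-c) kills it
  set JA : Ideal A := Ideal.map (algebraMap B A) JB with hJAdef
  set ANN : Ideal A :=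
    { carrier := {y : A | y * (1 - c) = 0}
      add_mem' := by
        intro a b ha hb
        simp only [Set.mem_setOf_eq] at *
        rw [add_mul, ha, hb, add_zero]
      zero_mem' := by simp
      smul_mem' := by
        intro r y hy
        simp only [smul_eq_mul, Set.mem_setOf_eq] at *
        rw [mul_assoc, hy, mul_zero] } with hANNdef
  have hJAANN : JA ≤ ANN :=
    Ideal.map_le_iff_le_comap.mpr (fun b hb => Ideal.mem_comap.mpr (hann b hb))
  -- A/JA is integral over k, hence powers of c stabilize mod JA
  have haux : Algebra.IsIntegral k (A ⧸ JA) :=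
    aux_int B hs JB JA hfinJB (fun b hb => Ideal.mem_map_of_mem _ hb)
  obtain ⟨N, t0, hN, hstab⟩ := pow_stab (Ideal.Quotient.mk JA c) (haux.isIntegral _)
  obtain ⟨t, ht⟩ := Ideal.Quotient.mk_surjective t0
  have hmem : c ^ N - t * c ^ (N + 1) ∈ JA := by
    have heq : Ideal.Quotient.mk JA (c ^ N) = Ideal.Quotient.mk JA (t * c ^ (N + 1)) := by
      rw [map_pow, map_mul, map_pow, ht, hstab]
    exact Ideal.Quotient.eq.mp heq
  have hα : (c ^ N - t * c ^ (N + 1)) * (1 - c) = 0 := hJAANN hmem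
  set μ : A := 1 + t - t * c with hμdef
  have hμ : c ^ N = μ * c ^ (N + 1) := by
    have hNsplit : c ^ (N + 1) = c ^ N * c := pow_succ c N
    have hNsplit2 : c ^ (N + 2) = c ^ N * c * c := by rw [pow_succ, pow_succ]
    rw [hμdef]
    have hα' : (c ^ N - t * (c ^ N * c)) * (1 - c) = 0 := by rw [← hNsplit]; exact hα
    calc c ^ N = (c ^ N - t * (c ^ N * c)) * (1 - c)
          + (1 + t - t * c) * (c ^ N * c) := by ring
      _ = (1 + t - t * c) * c ^ (N + 1) := by rw [hα', hNsplit]; ring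
  obtain ⟨e, heidem, hce, hee⟩ := idem_of_stab c μ N hμ
  have hep : e ∈ p.asIdeal := by
    rw [hee]
    exact Ideal.mul_mem_left _ _ (Ideal.pow_mem_of_mem _ hcp N (by omega))
  -- elements of JB are multiples of e
  have hbe : ∀ b : B, b ∈ JB → (b : A) * e = (b : A) := by
    intro b hb
    have h1 : (b : A) * c = (b : A) := by
      have h0 := hann b hb
      have : (b : A) * 1 - (b : A) * c = 0 := by rw [← mul_sub]; exact h0
      rw [mul_one] at this
      linear_combination -this
    have h2 : ∀ m : ℕ, (b : A) * c ^ m = (b : A) := by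
      intro m
      induction m with
      | zero => simp
      | succ m ih => rw [pow_succ, ← mul_assoc, ih, h1]
    calc (b : A) * e = ((b : A) * c ^ N) * e := by rw [h2 N]
      _ = (b : A) * (c ^ N * e) := by ring
      _ = (b : A) * c ^ N := by rw [hce]
      _ = (b : A) := h2 N
  set Ie : Ideal A := Ideal.span {e} with hIedef
  have haux' : Algebra.IsIntegral k (A ⧸ Ie) :=
    aux_int B hs JB Ie hfinJB
      (fun b hb => Ideal.mem_span_singleton'.mpr ⟨(b : A), hbe b hb⟩)
  -- p' is in the clopen zero locus of e
  have hclop := clopen_idem e heidem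
  have hpz : p ∈ PrimeSpectrum.zeroLocus ({e} : Set A) := by
    rw [PrimeSpectrum.mem_zeroLocus, Set.singleton_subset_iff]; exact hep
  have hp'z : p' ∈ PrimeSpectrum.zeroLocus ({e} : Set A) :=
    hclop.connectedComponent_subset hpz hp'
  have hep' : e ∈ p'.asIdeal := by
    rw [PrimeSpectrum.mem_zeroLocus, Set.singleton_subset_iff] at hp'z; exact hp'z
  -- pass to A / (e)
  set π : A →+* A ⧸ Ie := Ideal.Quotient.mk Ie with hπdef
  have hπsurj : Function.Surjective π := Ideal.Quotient.mk_surjective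
  have hkerπ : RingHom.ker π = Ie := Ideal.mk_ker
  have hIep : Ie ≤ p.asIdeal := by
    rw [hIedef, Ideal.span_le, Set.singleton_subset_iff]; exact hep
  have hIep' : Ie ≤ p'.asIdeal := by
    rw [hIedef, Ideal.span_le, Set.singleton_subset_iff]; exact hep'
  haveI hPprime : (Ideal.map π p.asIdeal).IsPrime :=
    Ideal.map_isPrime_of_surjective hπsurj (by rw [hkerπ]; exact hIep)
  haveI hP'prime : (Ideal.map π p'.asIdeal).IsPrime :=
    Ideal.map_isPrime_of_surjective hπsurj (by rw [hkerπ]; exact hIep')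
  have hcomapP : Ideal.comap π (Ideal.map π p.asIdeal) = p.asIdeal := by
    rw [Ideal.comap_map_of_surjective π hπsurj, ← RingHom.ker_eq_comap_bot, hkerπ]
    exact sup_eq_left.mpr hIep
  have hcomapP' : Ideal.comap π (Ideal.map π p'.asIdeal) = p'.asIdeal := by
    rw [Ideal.comap_map_of_surjective π hπsurj, ← RingHom.ker_eq_comap_bot, hkerπ]
    exact sup_eq_left.mpr hIep'
  have hne2 : Ideal.map π p.asIdeal ≠ Ideal.map π p'.asIdeal := by
    intro hEq
    apply hne
    apply PrimeSpectrum.ext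
    rw [← hcomapP', ← hcomapP, hEq]
  obtain ⟨f, hfidem, hfP, hfP'⟩ := sep_idem haux' hPprime hP'prime hne2
  obtain ⟨f₀, hf₀⟩ := hπsurj f
  set ftil : A := f₀ * (1 - e) with hftil
  have h1me : (1 - e) * (1 - e) = 1 - e := by linear_combination heidem
  have hring : ftil * ftil - ftil = (f₀ * f₀ - f₀) * (1 - e) := by
    calc ftil * ftil - ftil = f₀ * f₀ * ((1 - e) * (1 - e)) - f₀ * (1 - e) := by
          rw [hftil]; ring
      _ = (f₀ * f₀ - f₀) * (1 - e) := by rw [h1me]; ring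
  have hmemker : f₀ * f₀ - f₀ ∈ Ie := by
    have h0 : π (f₀ * f₀ - f₀) = 0 := by
      rw [map_sub, map_mul, hf₀]
      rw [hfidem]; ring
    rw [← hkerπ]
    exact h0
  obtain ⟨r, hr⟩ := Ideal.mem_span_singleton'.mp (hIedef ▸ hmemker)
  have hftilidem : ftil * ftil = ftil := by
    have h0 : ftil * ftil - ftil = 0 := by
      rw [hring, ← hr]
      calc r * e * (1 - e) = r * (e - e * e) := by ring
        _ = 0 := by rw [heidem]; ring
    exact sub_eq_zero.mp h0
  have hπe : π e = 0 := by
    rw [← RingHom.mem_ker, hkerπ, hIedef]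
    exact Ideal.subset_span rfl
  have hπftil : π ftil = f := by
    rw [hftil, map_mul, map_sub, map_one, hπe, sub_zero, mul_one, hf₀]
  have hftp : ftil ∈ p.asIdeal := by
    have h0 : π ftil ∈ Ideal.map π p.asIdeal := by rw [hπftil]; exact hfP
    have h2 : ftil ∈ Ideal.comap π (Ideal.map π p.asIdeal) := Ideal.mem_comap.mpr h0
    rwa [hcomapP] at h2
  have hftnp' : ftil ∉ p'.asIdeal := fun hmem =>
    hfP' (by rw [← hπftil]; exact Ideal.mem_map_of_mem π hmem)
  have hclop2 := clopen_idem ftil hftilidem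
  have hpz2 : p ∈ PrimeSpectrum.zeroLocus ({ftil} : Set A) := by
    rw [PrimeSpectrum.mem_zeroLocus, Set.singleton_subset_iff]; exact hftp
  have hp'z2 := hclop2.connectedComponent_subset hpz2 hp'
  rw [PrimeSpectrum.mem_zeroLocus, Set.singleton_subset_iff] at hp'z2
  exact hftnp' hp'z2

/-- (a) → (b), pure topology -/
lemma main_ab {X : Type*} [TopologicalSpace X] (p : X)
    (h : connectedComponent p = {p}) : ({p} : Set X) ∈ irreducibleComponents X := by
  refine ⟨isIrreducible_singleton, ?_⟩
  intro t ht hsub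
  have h1 : t ⊆ connectedComponent p :=
    ht.2.isPreconnected.subset_connectedComponent (hsub rfl)
  rw [h] at h1
  exact h1

/-- (b) → (c) -/
lemma main_bc {A : Type*} [CommRing A] [Algebra k A] (B : Subalgebra k A)
    (hB : B.FG) (hs : Algebra.IsIntegral B A) (p : PrimeSpectrum A)
    (hb : ({p} : Set (PrimeSpectrum A)) ∈ irreducibleComponents (PrimeSpectrum A)) :
    Algebra.IsIntegral k (Localization.AtPrime p.asIdeal) := by
  have hft : Algebra.FiniteType k B := (Subalgebra.fg_iff_finiteType B).mp hB
  -- p is a closed point, i.e. maximal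
  have hclosed : IsClosed ({p} : Set (PrimeSpectrum A)) := by
    have hcl : closure ({p} : Set (PrimeSpectrum A)) ⊆ {p} :=
      hb.2 isIrreducible_singleton.closure subset_closure
    have : closure ({p} : Set (PrimeSpectrum A)) = {p} :=
      le_antisymm hcl subset_closure
    rw [← this]; exact isClosed_closure
  haveI hmax : p.asIdeal.IsMaximal :=
    (PrimeSpectrum.isClosed_singleton_iff_isMaximal p).mp hclosed
  -- p is minimal
  have hmin : ∀ q : PrimeSpectrum A, q.asIdeal ≤ p.asIdeal → q = p := by
    intro q hq
    have h1 : ({p} : Set (PrimeSpectrum A)) ⊆ closure {q} := by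
      rw [Set.singleton_subset_iff]
      exact (PrimeSpectrum.le_iff_mem_closure q p).mp hq
    have h2 : closure ({q} : Set (PrimeSpectrum A)) ⊆ {p} :=
      hb.2 isIrreducible_singleton.closure h1
    exact h2 (subset_closure rfl)
  -- residue field of A at p
  letI : Field (A ⧸ p.asIdeal) := Ideal.Quotient.field p.asIdeal
  set χ : A →+* A ⧸ p.asIdeal := Ideal.Quotient.mk p.asIdeal with hχdef
  set ψ : B →+* A ⧸ p.asIdeal := χ.comp (algebraMap B A) with hψdef
  set q0 : Ideal B := RingHom.ker ψ with hq0def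
  -- B ⧸ q0 is a field: embeds into the field A/p integrally
  set ψq : (B ⧸ q0) →+* A ⧸ p.asIdeal := RingHom.kerLift ψ with hψqdef
  have hinj : Function.Injective ψq := RingHom.kerLift_injective ψ
  letI : Algebra (B ⧸ q0) (A ⧸ p.asIdeal) := ψq.toAlgebra
  haveI hABint : Algebra.IsIntegral (B ⧸ q0) (A ⧸ p.asIdeal) := by
    constructor
    intro a
    obtain ⟨a₀, rfl⟩ := Ideal.Quotient.mk_surjective a
    obtain ⟨P, hPmonic, hPev⟩ := hs.isIntegral a₀
    refine ⟨P.map (Ideal.Quotient.mk q0), hPmonic.map _, ?_⟩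
    rw [Polynomial.eval₂_map]
    have hcomp : (algebraMap (B ⧸ q0) (A ⧸ p.asIdeal)).comp (Ideal.Quotient.mk q0)
        = χ.comp (algebraMap B A) := by
      ext b
      rfl
    rw [hcomp]
    have h2 := Polynomial.hom_eval₂ (p := P) (f := algebraMap B A) (g := χ) a₀
    have h3 : χ (Polynomial.eval₂ (algebraMap B A) a₀ P) =
        Polynomial.eval₂ (χ.comp (algebraMap B A)) (Ideal.Quotient.mk p.asIdeal a₀) P := h2
    rw [← h3, hPev, map_zero]
  have hfieldBq : IsField (B ⧸ q0) :=
    isField_of_isIntegral_of_isField (R := B ⧸ q0) (S := A ⧸ p.asIdeal)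
      hinj (Field.toIsField _)
  -- Zariski's lemma: B ⧸ q0 is finite over k
  letI : Field (B ⧸ q0) := hfieldBq.toField
  haveI : Algebra.FiniteType k (B ⧸ q0) :=
    hft.of_surjective (Ideal.Quotient.mkₐ k q0)
      (Ideal.Quotient.mkₐ_surjective k q0)
  have hfinBq : Module.Finite k (B ⧸ q0) := finite_of_finite_type_of_isJacobsonRing k (B ⧸ q0)
  -- hence A ⧸ p is integral over k
  have hApInt : Algebra.IsIntegral k (A ⧸ p.asIdeal) :=
    aux_int B hs q0 p.asIdeal hfinBq
      (fun b hbmem => by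
        have : ψ b = 0 := hbmem
        exact Ideal.Quotient.eq_zero_iff_mem.mp this)
  -- now the localization
  set L := Localization.AtPrime p.asIdeal with hLdef
  -- every prime of L is the maximal ideal
  have huniq : ∀ Q : Ideal L, Q.IsPrime → Q = IsLocalRing.maximalIdeal L := by
    intro Q hQ
    have hd := (IsLocalization.isPrime_iff_isPrime_disjoint p.asIdeal.primeCompl L Q).mp hQ
    have hle : Q.comap (algebraMap A L) ≤ p.asIdeal := by
      intro x hx
      by_contra hxp
      have hx1 : x ∈ p.asIdeal.primeCompl := hxp
      exact Set.disjoint_left.mp hd.2 hx1 hx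
    haveI : (Q.comap (algebraMap A L)).IsPrime := hd.1
    have hQeq : Q.comap (algebraMap A L) = p.asIdeal :=
      congrArg PrimeSpectrum.asIdeal (hmin ⟨Q.comap (algebraMap A L), hd.1⟩ hle)
    calc Q = Ideal.map (algebraMap A L) (Q.comap (algebraMap A L)) :=
          (IsLocalization.map_comap p.asIdeal.primeCompl L Q).symm
      _ = Ideal.map (algebraMap A L) p.asIdeal := by rw [hQeq]
      _ = IsLocalRing.maximalIdeal L := Localization.AtPrime.map_eq_maximalIdeal
  have hnil : ∀ y : L, y ∈ IsLocalRing.maximalIdeal L → IsNilpotent y := by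
    intro y hy
    rw [← mem_nilradical, nilradical_eq_sInf, Submodule.mem_sInf]
    intro J hJ
    rw [huniq J hJ]
    exact hy
  -- the residue map from A/p to the residue field of L is surjective
  set m := IsLocalRing.maximalIdeal L with hmdef
  set ρ : (A ⧸ p.asIdeal) →ₐ[k] (L ⧸ m) :=
    Ideal.Quotient.liftₐ p.asIdeal
      ((Ideal.Quotient.mkₐ k m).comp (IsScalarTower.toAlgHom k A L))
      (fun a ha => by
        have h1 : algebraMap A L a ∈ m :=
          (IsLocalization.AtPrime.to_map_mem_maximal_iff L p.asIdeal a).mpr ha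
        have h2 : Ideal.Quotient.mk m (algebraMap A L a) = 0 :=
          Ideal.Quotient.eq_zero_iff_mem.mpr h1
        exact h2) with hρdef
  have hρsurj : Function.Surjective ρ := by
    intro y'
    obtain ⟨y, rfl⟩ := Ideal.Quotient.mk_surjective y'
    obtain ⟨a, u, hy⟩ := IsLocalization.exists_mk'_eq p.asIdeal.primeCompl y
    have hu0 : χ (u : A) ≠ 0 := by
      rw [hχdef]
      intro h0
      exact u.2 (Ideal.Quotient.eq_zero_iff_mem.mp h0)
    set v : A ⧸ p.asIdeal := (χ (u : A))⁻¹ with hvdef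
    refine ⟨χ a * v, ?_⟩
    have hχcomp : ∀ z : A, ρ (χ z) = Ideal.Quotient.mk m (algebraMap A L z) := fun z => rfl
    have hmk : Ideal.Quotient.mk m y * Ideal.Quotient.mk m (algebraMap A L (u : A))
        = Ideal.Quotient.mk m (algebraMap A L a) := by
      rw [← map_mul, ← hy, IsLocalization.mk'_spec]
    have hvu : ρ (χ (u : A)) * ρ v = 1 := by
      rw [← map_mul, hvdef, mul_inv_cancel₀ hu0, map_one]
    calc ρ (χ a * v) = ρ (χ a) * ρ v := map_mul _ _ _
      _ = Ideal.Quotient.mk m (algebraMap A L a) * ρ v := by rw [hχcomp]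
      _ = (Ideal.Quotient.mk m y * ρ (χ (u : A))) * ρ v := by rw [← hmk, hχcomp]
      _ = Ideal.Quotient.mk m y * (ρ (χ (u : A)) * ρ v) := by ring
      _ = Ideal.Quotient.mk m y := by rw [hvu, mul_one]
  -- conclude integrality of L over k
  constructor
  intro y
  obtain ⟨z, hz⟩ := hρsurj (Ideal.Quotient.mk m y)
  obtain ⟨P, hPmonic, hPev⟩ := hApInt.isIntegral z
  have h1 : Ideal.Quotient.mk m (Polynomial.aeval y P) = 0 := by
    have e1 : (Ideal.Quotient.mkₐ k m) (Polynomial.aeval y P)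
        = Polynomial.aeval ((Ideal.Quotient.mkₐ k m) y) P :=
      (Polynomial.aeval_algHom_apply (Ideal.Quotient.mkₐ k m) y P).symm
    have e2 : Polynomial.aeval (ρ z) P = ρ (Polynomial.aeval z P) :=
      Polynomial.aeval_algHom_apply ρ z P
    have e3 : Polynomial.aeval z P = 0 := hPev
    have e4 : ((Ideal.Quotient.mkₐ k m) y : L ⧸ m) = ρ z := hz.symm
    calc Ideal.Quotient.mk m (Polynomial.aeval y P)
        = (Ideal.Quotient.mkₐ k m) (Polynomial.aeval y P) := rfl
      _ = Polynomial.aeval ((Ideal.Quotient.mkₐ k m) y) P := e1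
      _ = Polynomial.aeval (ρ z) P := by rw [e4]
      _ = ρ (Polynomial.aeval z P) := e2
      _ = 0 := by rw [e3, map_zero]
  have h2 : Polynomial.aeval y P ∈ m := Ideal.Quotient.eq_zero_iff_mem.mp h1
  obtain ⟨r, hr⟩ := hnil _ h2
  have hr' : (Polynomial.aeval y P) ^ (r + 1) = 0 := by rw [pow_succ, hr, zero_mul]
  refine ⟨P ^ (r + 1), hPmonic.pow _, ?_⟩
  have : Polynomial.aeval y (P ^ (r + 1)) = 0 := by rw [map_pow, hr']
  simpa [Polynomial.aeval_def] using this


end Helpers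

/-- For a point `p` of the spectrum of an algebra `A` of finite expansion over a field `k`,
the following are equivalent: (a) `p` is quasi-isolated, i.e. its connected component in
`Spec A` is the singleton `{p}`; (b) `{p}` is an irreducible component of `Spec A`; (c) the
local ring `A_p` is integral over `k`. -/
theorem quasiIsolated_tfae (k A : Type*) [Field k] [CommRing A] [Algebra k A]
    (hA : Algebra.FiniteExpansion k A) (p : PrimeSpectrum A) :
    List.TFAE [
      connectedComponent p = {p},
      ({p} : Set (PrimeSpectrum A)) ∈ irreducibleComponents (PrimeSpectrum A),
      Algebra.IsIntegral k (Localization.AtPrime p.asIdeal)] := by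
  obtain ⟨s, hs⟩ := hA
  tfae_have 1 → 2 := main_ab p
  tfae_have 2 → 3 := main_bc (Algebra.adjoin k (s : Set A)) ⟨s, rfl⟩ hs p
  tfae_have 3 → 1 := main_ca (Algebra.adjoin k (s : Set A)) ⟨s, rfl⟩ hs p
  tfae_finish
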